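/- Let ℓ be the line {(x,y) ∈ ℝ² : l₁x + l₂y + l₃ = 0} with (l₁,l₂) ≠ (0,0), let A = (a_x, a_y) ∈ ℝ², and let P₁, P₂, Q : ℝ → ℝ be polynomial functions of degree at most 1. Define P₁′(τ) = −(a_y l₂ + l₃)·P₁(τ) + a_x·(l₂·P₂(τ) + l₃·Q(τ)), P₂′(τ) = a_y l₁·P₁(τ) − (a_x l₁ + l₃)·P₂(τ) + a_y l₃·Q(τ), and Q′(τ) = l₁·P₁(τ) + l₂·P₂(τ) − (a_x l₁ + a_y l₂)·Q(τ); these are again polynomial functions of τ of degree at most 1. Then for every τ ∈ ℝ with Q(τ) ≠ 0 and Q′(τ) ≠ 0, writing X(τ) = (P₁(τ)/Q(τ), P₂(τ)/Q(τ)), the point Y(τ) = (P₁′(τ)/Q′(τ), P₂′(τ)/Q′(τ)) lies on ℓ and lies on the line through X(τ) and A (in particular, if X(τ) ≠ A and the line through X(τ) and A is not parallel to ℓ, then Y(τ) is the unique intersection point of ℓ with the line through X(τ) and A). -/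

import Mathlib

/-- let `ℓ = {(x,y) | l₁x + l₂y + l₃ = 0}` with `(l₁,l₂) ≠ (0,0)`,
let `A = (a_x, a_y)`, and let `P₁, P₂, Q` be polynomial functions of degree at
most 1. With `P₁', P₂', Q'` as defined below (again polynomial of degree at most
1), for every `τ` with `Q τ ≠ 0` and `Q' τ ≠ 0`, the point
`Y = (P₁' τ / Q' τ, P₂' τ / Q' τ)` lies on `ℓ` and is collinear with
`X = (P₁ τ / Q τ, P₂ τ / Q τ)` and `A`. -/
theorem intersection_point_coordinates_linear_fractional
    (l₁ l₂ l₃ a_x a_y : ℝ) (hl : (l₁, l₂) ≠ ((0 : ℝ), (0 : ℝ)))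
    (P₁ P₂ Q : ℝ → ℝ)
    (hP₁ : ∃ c d : ℝ, ∀ τ, P₁ τ = c * τ + d)
    (hP₂ : ∃ c d : ℝ, ∀ τ, P₂ τ = c * τ + d)
    (hQ : ∃ c d : ℝ, ∀ τ, Q τ = c * τ + d) :
    let P₁' : ℝ → ℝ := fun τ => -(a_y * l₂ + l₃) * P₁ τ + a_x * (l₂ * P₂ τ + l₃ * Q τ)
    let P₂' : ℝ → ℝ := fun τ => a_y * l₁ * P₁ τ - (a_x * l₁ + l₃) * P₂ τ + a_y * l₃ * Q τ
    let Q' : ℝ → ℝ := fun τ => l₁ * P₁ τ + l₂ * P₂ τ - (a_x * l₁ + a_y * l₂) * Q τ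
    (∃ c d : ℝ, ∀ τ, P₁' τ = c * τ + d) ∧
    (∃ c d : ℝ, ∀ τ, P₂' τ = c * τ + d) ∧
    (∃ c d : ℝ, ∀ τ, Q' τ = c * τ + d) ∧
    ∀ τ : ℝ, Q τ ≠ 0 → Q' τ ≠ 0 →
      (l₁ * (P₁' τ / Q' τ) + l₂ * (P₂' τ / Q' τ) + l₃ = 0) ∧
      Collinear ℝ ({(P₁ τ / Q τ, P₂ τ / Q τ), (a_x, a_y),
        (P₁' τ / Q' τ, P₂' τ / Q' τ)} : Set (ℝ × ℝ)) := by
  obtain ⟨c₁, d₁, h₁⟩ := hP₁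
  obtain ⟨c₂, d₂, h₂⟩ := hP₂
  obtain ⟨c₃, d₃, h₃⟩ := hQ
  intro P₁' P₂' Q'
  refine ⟨⟨-(a_y * l₂ + l₃) * c₁ + a_x * (l₂ * c₂ + l₃ * c₃),
          -(a_y * l₂ + l₃) * d₁ + a_x * (l₂ * d₂ + l₃ * d₃),
          fun τ => by simp only [P₁', h₁, h₂, h₃]; ring⟩,
      ⟨a_y * l₁ * c₁ - (a_x * l₁ + l₃) * c₂ + a_y * l₃ * c₃,
          a_y * l₁ * d₁ - (a_x * l₁ + l₃) * d₂ + a_y * l₃ * d₃,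
          fun τ => by simp only [P₂', h₁, h₂, h₃]; ring⟩,
      ⟨l₁ * c₁ + l₂ * c₂ - (a_x * l₁ + a_y * l₂) * c₃,
          l₁ * d₁ + l₂ * d₂ - (a_x * l₁ + a_y * l₂) * d₃,
          fun τ => by simp only [Q', h₁, h₂, h₃]; ring⟩,
      fun τ hQτ hQ'τ => ?_⟩
  constructor
  · have key : l₁ * P₁' τ + l₂ * P₂' τ + l₃ * Q' τ = 0 := by
      simp only [P₁', P₂', Q']; ring
    field_simp
    linarith [key]
  · rw [collinear_iff_exists_forall_eq_smul_vadd]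
    refine ⟨(a_x, a_y), (P₁ τ / Q τ - a_x, P₂ τ / Q τ - a_y), fun p hp => ?_⟩
    simp only [Set.mem_insert_iff, Set.mem_singleton_iff] at hp
    rcases hp with rfl | rfl | rfl
    · exact ⟨1, by simp [Prod.ext_iff]⟩
    · exact ⟨0, by simp⟩
    · refine ⟨-((a_x * l₁ + a_y * l₂ + l₃) * Q τ / Q' τ), ?_⟩
      have e1 : P₁' τ / Q' τ - a_x = (a_x * l₁ + a_y * l₂ + l₃) * (a_x * Q τ - P₁ τ) / Q' τ := by
        rw [div_sub' hQ'τ]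
        congr 1
        simp only [P₁', Q']; ring
      have e2 : P₂' τ / Q' τ - a_y = (a_x * l₁ + a_y * l₂ + l₃) * (a_y * Q τ - P₂ τ) / Q' τ := by
        rw [div_sub' hQ'τ]
        congr 1
        simp only [P₂', Q']; ring
      have : (P₁' τ / Q' τ, P₂' τ / Q' τ) =
          ((P₁' τ / Q' τ - a_x) + a_x, (P₂' τ / Q' τ - a_y) + a_y) := by
        simp
      rw [this, e1, e2]
      simp only [Prod.ext_iff, Prod.smul_mk, Prod.mk_add_mk, vadd_eq_add, smul_eq_mul]
      constructor <;> · field_simp; ring
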